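/- For every repetitive nondeterministic finite automaton with translucent words (RNFAwtw) A, there exists an RNFAwtw B such that L(B) = L(A) and B only accepts once it has read and deleted its input completely; that is, in every accepting computation of B, the accepting step is applied to a configuration (q, λ) whose remaining tape content is the empty word. -/

import Mathlib

/-! Repetitive (non)deterministic finite automata with translucent words. -/

/-- Behavior of the automaton at the end-of-tape marker: halt accepting,
halt rejecting, or (in the repetitive case) continue in one of a set of states. -/
inductive EndBehavior (Q : Type) : Type where
  | accept : EndBehavior Q
  | reject : EndBehavior Q
  | cont : Set Q → EndBehavior Q

/-- `InStar S w` means `w` belongs to the Kleene star `S*` of the set of words `S`. -/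
def InStar {α : Type} (S : Set (List α)) (w : List α) : Prop :=
  ∃ l : List (List α), (∀ u ∈ l, u ∈ S) ∧ l.flatten = w

/-- A (repetitive) nondeterministic finite automaton with translucent words,
with state set `Q` over the alphabet `α`.  `tl q` is the set `τ(q)` of
translucent words of the state `q`, `delta` is the transition function and
`endB q` is the behavior at the end-of-tape marker.  The fields `tl_fin`,
`code_ne`, `prefix_code` and `tl_head` express that each `τ(q)` is finite,
that `τ(q) ∪ Σ_q` is a prefix code (no empty word, and no member is a proper
prefix of another member), and that no word of `τ(q)` begins with a letter
readable in `q`. -/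
structure RNFAwtw (α : Type) (Q : Type) : Type where
  init : Set Q
  tl : Q → Set (List α)
  delta : Q → α → Set Q
  endB : Q → EndBehavior Q
  tl_fin : ∀ q, (tl q).Finite
  code_ne : ∀ q, [] ∉ tl q
  prefix_code : ∀ q,
    ∀ u ∈ tl q ∪ {w | ∃ a, (delta q a).Nonempty ∧ w = [a]},
    ∀ v ∈ tl q ∪ {w | ∃ a, (delta q a).Nonempty ∧ w = [a]},
      u <+: v → u = v
  tl_head : ∀ q, ∀ t ∈ tl q, ∀ a, (delta q a).Nonempty → ¬ [a] <+: t

/-- Configurations: a pair of a state and the remaining tape content, or one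
of the two halting configurations. -/
inductive Conf (α Q : Type) : Type where
  | state : Q → List α → Conf α Q
  | accept : Conf α Q
  | reject : Conf α Q

/-- The single-step computation relation of an RNFAwtw. -/
inductive RNFAwtw.Step {α Q : Type} (A : RNFAwtw α Q) :
    Conf α Q → Conf α Q → Prop where
  | read {q q' : Q} {a : α} {u v : List α} :
      InStar (A.tl q) u → q' ∈ A.delta q a →
      RNFAwtw.Step A (Conf.state q (u ++ a :: v)) (Conf.state q' (u ++ v))
  | stuck {q : Q} {a : α} {u v : List α} :
      InStar (A.tl q) u → A.delta q a = ∅ →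
      (∀ t ∈ A.tl q, ¬ t <+: (a :: v)) →
      RNFAwtw.Step A (Conf.state q (u ++ a :: v)) Conf.reject
  | haltAccept {q : Q} {w : List α} :
      InStar (A.tl q) w → A.endB q = EndBehavior.accept →
      RNFAwtw.Step A (Conf.state q w) Conf.accept
  | haltReject {q : Q} {w : List α} :
      InStar (A.tl q) w → A.endB q = EndBehavior.reject →
      RNFAwtw.Step A (Conf.state q w) Conf.reject
  | goOn {q q' : Q} {w : List α} {S : Set Q} :
      InStar (A.tl q) w → A.endB q = EndBehavior.cont S → q' ∈ S →
      RNFAwtw.Step A (Conf.state q w) (Conf.state q' w)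

/-- `A` accepts the word `w`. -/
def RNFAwtw.Accepts {α Q : Type} (A : RNFAwtw α Q) (w : List α) : Prop :=
  ∃ q0 ∈ A.init, Relation.ReflTransGen A.Step (Conf.state q0 w) Conf.accept

/-- The language accepted by `A`. -/
def RNFAwtw.lang {α Q : Type} (A : RNFAwtw α Q) : Set (List α) :=
  { w | A.Accepts w }

/-- `A` is deterministic: one initial state, at most one transition per
state/letter pair, and at the end-of-tape marker the continuation (if any)
is a single state. -/
def RNFAwtw.Deterministic {α Q : Type} (A : RNFAwtw α Q) : Prop :=
  (∃ q0, A.init = {q0}) ∧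
  (∀ q a, (A.delta q a).Subsingleton) ∧
  (∀ q S, A.endB q = EndBehavior.cont S → ∃ q', S = {q'})

/-- `A` is non-repetitive: at the end-of-tape marker it always halts. -/
def RNFAwtw.NonRepetitive {α Q : Type} (A : RNFAwtw α Q) : Prop :=
  ∀ q S, A.endB q ≠ EndBehavior.cont S

/-- `L` is accepted by some repetitive NFAwtw (with a finite state set). -/
def AcceptedByRNFAwtw {α : Type} (L : Set (List α)) : Prop :=
  ∃ (Q : Type) (_ : Finite Q) (A : RNFAwtw α Q), A.lang = L

/-- `L` is accepted by some repetitive DFAwtw. -/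
def AcceptedByRDFAwtw {α : Type} (L : Set (List α)) : Prop :=
  ∃ (Q : Type) (_ : Finite Q) (A : RNFAwtw α Q), A.Deterministic ∧ A.lang = L

/-- `L` is accepted by some (non-repetitive) NFAwtw. -/
def AcceptedByNFAwtw {α : Type} (L : Set (List α)) : Prop :=
  ∃ (Q : Type) (_ : Finite Q) (A : RNFAwtw α Q), A.NonRepetitive ∧ A.lang = L

/-- `L` is accepted by some (non-repetitive) DFAwtw. -/
def AcceptedByDFAwtw {α : Type} (L : Set (List α)) : Prop :=
  ∃ (Q : Type) (_ : Finite Q) (A : RNFAwtw α Q),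
    A.NonRepetitive ∧ A.Deterministic ∧ A.lang = L

/-- The two-letter alphabet `{a, b}`. -/
inductive Letter : Type where
  | a : Letter
  | b : Letter
deriving DecidableEq

instance : Fintype Letter :=
  ⟨{Letter.a, Letter.b}, fun x => by cases x <;> simp⟩

namespace ReadAllAux

variable {α Q : Type}

lemma instar_empty {w : List α} (h : InStar (∅ : Set (List α)) w) : w = [] := by
  obtain ⟨l, hl, hf⟩ := h
  cases l with
  | nil => exact hf.symm
  | cons u l => exact absurd (hl u (by simp)) (by simp)

lemma instar_nil (S : Set (List α)) : InStar S [] := ⟨[], by simp, rfl⟩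

/-- The modified automaton. -/
def Bmk (A : RNFAwtw α Q) : RNFAwtw α (Q ⊕ Unit) where
  init := Sum.inl '' A.init
  tl := fun q => match q with
    | Sum.inl q => A.tl q
    | Sum.inr _ => ∅
  delta := fun q a => match q with
    | Sum.inl q => Sum.inl '' A.delta q a
    | Sum.inr _ => {Sum.inr ()}
  endB := fun q => match q with
    | Sum.inl q => match A.endB q with
      | EndBehavior.accept => EndBehavior.cont {Sum.inr ()}
      | EndBehavior.reject => EndBehavior.reject
      | EndBehavior.cont S => EndBehavior.cont (Sum.inl '' S)
    | Sum.inr _ => EndBehavior.accept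
  tl_fin := by
    rintro (q | q)
    · exact A.tl_fin q
    · exact Set.finite_empty
  code_ne := by
    rintro (q | q)
    · exact A.code_ne q
    · simp
  prefix_code := by
    rintro (q | q) u hu v hv hp
    · have e : {w | ∃ a, (Sum.inl '' A.delta q a : Set (Q ⊕ Unit)).Nonempty ∧ w = [a]}
          = {w | ∃ a, (A.delta q a).Nonempty ∧ w = [a]} := by
        ext w; simp [Set.image_nonempty]
      simp only [e] at hu hv
      exact A.prefix_code q u hu v hv hp
    · simp only [Set.union_def, Set.mem_setOf_eq, Set.mem_empty_iff_false, false_or] at hu hv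
      obtain ⟨a, -, rfl⟩ := hu
      obtain ⟨b, -, rfl⟩ := hv
      obtain ⟨t, ht⟩ := hp
      cases ht
      rfl
  tl_head := by
    rintro (q | q) t ht a ha
    · exact A.tl_head q t ht a (by simpa [Set.image_nonempty] using ha)
    · exact absurd ht (by simp)

lemma Bmk_drain (A : RNFAwtw α Q) (w : List α) :
    Relation.ReflTransGen (Bmk A).Step
      (Conf.state (Sum.inr () : Q ⊕ Unit) w) Conf.accept := by
  induction w with
  | nil =>
    exact Relation.ReflTransGen.single
      (RNFAwtw.Step.haltAccept (instar_nil _) rfl)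
  | cons a v ih =>
    refine Relation.ReflTransGen.head ?_ ih
    have := @RNFAwtw.Step.read α (Q ⊕ Unit) (Bmk A) (Sum.inr ()) (Sum.inr ()) a [] v
      (instar_nil _) (by simp [Bmk])
    simpa using this

/-- Forward simulation map. -/
def mapConf : Conf α (Q ⊕ Unit) → Conf α Q
  | Conf.state (Sum.inl q) w => Conf.state q w
  | Conf.state (Sum.inr _) _ => Conf.accept
  | Conf.accept => Conf.accept
  | Conf.reject => Conf.reject

lemma step_forward (A : RNFAwtw α Q) {c c' : Conf α (Q ⊕ Unit)}
    (h : (Bmk A).Step c c') :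
    Relation.ReflTransGen A.Step (mapConf c) (mapConf c') := by
  cases h with
  | @read q q' a u v hu hq =>
    cases q with
    | inl q =>
      simp only [Bmk, Set.mem_image] at hq
      obtain ⟨p, hp, rfl⟩ := hq
      exact Relation.ReflTransGen.single (RNFAwtw.Step.read hu hp)
    | inr q =>
      have : q' = Sum.inr () := by simpa [Bmk] using hq
      subst this
      exact Relation.ReflTransGen.refl
  | @stuck q a u v hu hd ht =>
    cases q with
    | inl q =>
      have hd' : A.delta q a = ∅ := by
        simpa [Bmk, Set.image_eq_empty] using hd
      exact Relation.ReflTransGen.single (RNFAwtw.Step.stuck hu hd' ht)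
    | inr q =>
      exact absurd hd (by simp [Bmk])
  | @haltAccept q w hw he =>
    cases q with
    | inl q =>
      exfalso
      simp only [Bmk] at he
      cases hA : A.endB q <;> simp [hA] at he
    | inr q => exact Relation.ReflTransGen.refl
  | @haltReject q w hw he =>
    cases q with
    | inl q =>
      simp only [Bmk] at he
      have hA : A.endB q = EndBehavior.reject := by
        cases hA : A.endB q
        · exfalso; rw [hA] at he; cases he
        · rfl
        · exfalso; rw [hA] at he; cases he
      exact Relation.ReflTransGen.single (RNFAwtw.Step.haltReject hw hA)
    | inr q =>
      exfalso; simp [Bmk] at he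
  | @goOn q q' w S hw he hq' =>
    cases q with
    | inl q =>
      simp only [Bmk] at he
      cases hA : A.endB q with
      | accept =>
        rw [hA] at he
        cases he
        have : q' = Sum.inr () := by simpa using hq'
        subst this
        exact Relation.ReflTransGen.single (RNFAwtw.Step.haltAccept hw hA)
      | reject => rw [hA] at he; cases he
      | cont S0 =>
        rw [hA] at he
        cases he
        obtain ⟨p, hp, rfl⟩ := hq'
        exact Relation.ReflTransGen.single (RNFAwtw.Step.goOn hw hA hp)
    | inr q =>
      exfalso; simp [Bmk] at he

lemma steps_forward (A : RNFAwtw α Q) {c c' : Conf α (Q ⊕ Unit)}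
    (h : Relation.ReflTransGen (Bmk A).Step c c') :
    Relation.ReflTransGen A.Step (mapConf c) (mapConf c') := by
  induction h with
  | refl => exact Relation.ReflTransGen.refl
  | tail _ hstep ih => exact ih.trans (step_forward A hstep)

/-- Backward simulation map. -/
def liftConf : Conf α Q → Conf α (Q ⊕ Unit)
  | Conf.state q w => Conf.state (Sum.inl q) w
  | Conf.accept => Conf.accept
  | Conf.reject => Conf.reject

lemma step_backward (A : RNFAwtw α Q) {c c' : Conf α Q} (h : A.Step c c') :
    Relation.ReflTransGen (Bmk A).Step (liftConf c) (liftConf c') := by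
  cases h with
  | @read q q' a u v hu hq =>
    exact Relation.ReflTransGen.single
      (RNFAwtw.Step.read (A := Bmk A) (q' := Sum.inl q') hu ⟨q', hq, rfl⟩)
  | @stuck q a u v hu hd ht =>
    exact Relation.ReflTransGen.single
      (RNFAwtw.Step.stuck hu (by simp [Bmk, hd]) ht)
  | @haltAccept q w hw he =>
    refine Relation.ReflTransGen.head ?_ (Bmk_drain A w)
    exact RNFAwtw.Step.goOn (S := {Sum.inr ()}) hw (by simp [Bmk, he]) rfl
  | @haltReject q w hw he =>
    exact Relation.ReflTransGen.single
      (RNFAwtw.Step.haltReject hw (by simp [Bmk, he]))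
  | @goOn q q' w S hw he hq' =>
    exact Relation.ReflTransGen.single
      (RNFAwtw.Step.goOn (S := Sum.inl '' S) hw (by simp [Bmk, he])
        ⟨q', hq', rfl⟩)

lemma steps_backward (A : RNFAwtw α Q) {c c' : Conf α Q}
    (h : Relation.ReflTransGen A.Step c c') :
    Relation.ReflTransGen (Bmk A).Step (liftConf c) (liftConf c') := by
  induction h with
  | refl => exact Relation.ReflTransGen.refl
  | tail _ hstep ih => exact ih.trans (step_backward A hstep)

end ReadAllAux

open ReadAllAux in
theorem readAll_RNFAwtw' {α Q : Type} [Finite α] [Finite Q] (A : RNFAwtw α Q) :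
    ∃ (Q' : Type) (_ : Finite Q') (B : RNFAwtw α Q'),
      B.lang = A.lang ∧
      ∀ (q : Q') (w : List α), B.Step (Conf.state q w) Conf.accept → w = [] := by
  refine ⟨Q ⊕ Unit, inferInstance, Bmk A, ?_, ?_⟩
  · ext w
    constructor
    · rintro ⟨q0, hq0, hrun⟩
      obtain ⟨p0, hp0, rfl⟩ := hq0
      exact ⟨p0, hp0, steps_forward A hrun⟩
    · rintro ⟨q0, hq0, hrun⟩
      exact ⟨Sum.inl q0, ⟨q0, hq0, rfl⟩, steps_backward A hrun⟩
  · intro q w h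
    cases h with
    | haltAccept hw he =>
      cases q with
      | inl q =>
        exfalso
        simp only [Bmk] at he
        cases hA : A.endB q <;> simp [hA] at he
      | inr q => exact instar_empty hw

/-- For every RNFAwtw `A` there is an RNFAwtw `B` with the same language that
only accepts once it has read and deleted its input completely: every
accepting step of `B` is applied to a configuration whose remaining tape
content is the empty word. -/
theorem readAll_RNFAwtw {α Q : Type} [Finite α] [Finite Q] (A : RNFAwtw α Q) :
    ∃ (Q' : Type) (_ : Finite Q') (B : RNFAwtw α Q'),
      B.lang = A.lang ∧
      ∀ (q : Q') (w : List α), B.Step (Conf.state q w) Conf.accept → w = [] := by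
  exact readAll_RNFAwtw' A
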